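/- Let n₁, n₂ ≥ 1 and 0 < λ₁ ≤ η ≤ μ₁. Then the function u ↦ [n₁μ₁/(1-(1-μ₁)u) + n₂η/(1-(1-η)u)] / [n₁λ₁/(1-(1-λ₁)u) + n₂η/(1-(1-η)u)] is decreasing in u ∈ (0,1). (Since u = F̄(x) is decreasing in x, this says r̃_{Y_{n:n}}(x)/r̃_{X_{n:n}}(x) is increasing in x, i.e., X_{n:n} ≲_{rhr} Y_{n:n}: X_{n:n} ages faster than Y_{n:n} in terms of the reversed hazard rate.) -/

import Mathlib

open Finset

lemma cross_po (a b u v N M : ℝ) (hau : 1 - (1 - a) * u ≠ 0) (hav : 1 - (1 - a) * v ≠ 0)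
    (hbu : 1 - (1 - b) * u ≠ 0) (hbv : 1 - (1 - b) * v ≠ 0) :
    N * a / (1 - (1 - a) * u) * (M * b / (1 - (1 - b) * v)) -
      N * a / (1 - (1 - a) * v) * (M * b / (1 - (1 - b) * u)) =
    (v - u) * (N * M * a * b * (a - b) /
      ((1 - (1 - a) * u) * ((1 - (1 - a) * v) * ((1 - (1 - b) * u) * (1 - (1 - b) * v))))) := by
  rw [div_mul_div_comm, div_mul_div_comm, div_sub_div _ _ (mul_ne_zero hau hbv) (mul_ne_zero hav hbu),
    mul_div_assoc', div_eq_div_iff (mul_ne_zero (mul_ne_zero hau hbv) (mul_ne_zero hav hbu))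
      (mul_ne_zero hau (mul_ne_zero hav (mul_ne_zero hbu hbv)))]
  ring

set_option maxHeartbeats 1000000 in
theorem parallel_po_relative_rhr_ageing
    (n₁ n₂ : ℕ) (hn₁ : 1 ≤ n₁) (hn₂ : 1 ≤ n₂)
    (lam₁ mu₁ eta : ℝ) (hl₁ : 0 < lam₁)
    (h₁ : lam₁ ≤ eta) (h₂ : eta ≤ mu₁) :
    AntitoneOn (fun u : ℝ =>
      (n₁ * mu₁ / (1 - (1 - mu₁) * u) + n₂ * eta / (1 - (1 - eta) * u)) /
        (n₁ * lam₁ / (1 - (1 - lam₁) * u) + n₂ * eta / (1 - (1 - eta) * u)))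
      (Set.Ioo (0:ℝ) 1) := by
  intro u hu v hv huv
  obtain ⟨hu0, hu1⟩ := hu
  obtain ⟨hv0, hv1⟩ := hv
  have hN1 : (1:ℝ) ≤ (n₁:ℝ) := by exact_mod_cast hn₁
  have hN2 : (1:ℝ) ≤ (n₂:ℝ) := by exact_mod_cast hn₂
  have hN1p : (0:ℝ) < (n₁:ℝ) := lt_of_lt_of_le one_pos hN1
  have hN2p : (0:ℝ) < (n₂:ℝ) := lt_of_lt_of_le one_pos hN2
  have he : 0 < eta := lt_of_lt_of_le hl₁ h₁
  have hm : 0 < mu₁ := lt_of_lt_of_le he h₂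
  have h3 : lam₁ ≤ mu₁ := le_trans h₁ h₂
  have hD : ∀ a w : ℝ, 0 < a → 0 < w → w < 1 → 0 < 1 - (1 - a) * w := by
    intro a w ha hw0 hw1; nlinarith
  have hDlu := hD lam₁ u hl₁ hu0 hu1
  have hDlv := hD lam₁ v hl₁ hv0 hv1
  have hDmu := hD mu₁ u hm hu0 hu1
  have hDmv := hD mu₁ v hm hv0 hv1
  have hDeu := hD eta u he hu0 hu1
  have hDev := hD eta v he hv0 hv1
  simp only
  set Au : ℝ := n₁ * mu₁ / (1 - (1 - mu₁) * u) + n₂ * eta / (1 - (1 - eta) * u) with hAu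
  set Av : ℝ := n₁ * mu₁ / (1 - (1 - mu₁) * v) + n₂ * eta / (1 - (1 - eta) * v) with hAv
  set Cu : ℝ := n₁ * lam₁ / (1 - (1 - lam₁) * u) + n₂ * eta / (1 - (1 - eta) * u) with hCu
  set Cv : ℝ := n₁ * lam₁ / (1 - (1 - lam₁) * v) + n₂ * eta / (1 - (1 - eta) * v) with hCv
  have hCup : 0 < Cu := by
    apply add_pos <;> apply div_pos <;> positivity
  have hCvp : 0 < Cv := by
    apply add_pos <;> apply div_pos <;> positivity
  rw [div_le_div_iff₀ hCvp hCup]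
  have T1 := cross_po mu₁ lam₁ u v (n₁:ℝ) (n₁:ℝ) hDmu.ne' hDmv.ne' hDlu.ne' hDlv.ne'
  have T2 := cross_po mu₁ eta u v (n₁:ℝ) (n₂:ℝ) hDmu.ne' hDmv.ne' hDeu.ne' hDev.ne'
  have T3 := cross_po eta lam₁ u v (n₂:ℝ) (n₁:ℝ) hDeu.ne' hDev.ne' hDlu.ne' hDlv.ne'
  have T4 := cross_po eta eta u v (n₂:ℝ) (n₂:ℝ) hDeu.ne' hDev.ne' hDeu.ne' hDev.ne'
  have expand : Au * Cv - Av * Cu =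
      (n₁ * mu₁ / (1 - (1 - mu₁) * u) * (n₁ * lam₁ / (1 - (1 - lam₁) * v)) -
        n₁ * mu₁ / (1 - (1 - mu₁) * v) * (n₁ * lam₁ / (1 - (1 - lam₁) * u))) +
      ((n₁ * mu₁ / (1 - (1 - mu₁) * u) * (n₂ * eta / (1 - (1 - eta) * v)) -
        n₁ * mu₁ / (1 - (1 - mu₁) * v) * (n₂ * eta / (1 - (1 - eta) * u))) +
      ((n₂ * eta / (1 - (1 - eta) * u) * (n₁ * lam₁ / (1 - (1 - lam₁) * v)) -
        n₂ * eta / (1 - (1 - eta) * v) * (n₁ * lam₁ / (1 - (1 - lam₁) * u))) +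
      (n₂ * eta / (1 - (1 - eta) * u) * (n₂ * eta / (1 - (1 - eta) * v)) -
        n₂ * eta / (1 - (1 - eta) * v) * (n₂ * eta / (1 - (1 - eta) * u))))) := by
    rw [hAu, hAv, hCu, hCv]; ring
  rw [T1, T2, T3, T4] at expand
  have hvu : 0 ≤ v - u := sub_nonneg.mpr huv
  have p1 : 0 ≤ (n₁:ℝ) * n₁ * mu₁ * lam₁ * (mu₁ - lam₁) /
      ((1 - (1 - mu₁) * u) * ((1 - (1 - mu₁) * v) * ((1 - (1 - lam₁) * u) * (1 - (1 - lam₁) * v)))) := by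
    apply div_nonneg
    · exact mul_nonneg (by positivity) (by linarith)
    · positivity
  have p2 : 0 ≤ (n₁:ℝ) * n₂ * mu₁ * eta * (mu₁ - eta) /
      ((1 - (1 - mu₁) * u) * ((1 - (1 - mu₁) * v) * ((1 - (1 - eta) * u) * (1 - (1 - eta) * v)))) := by
    apply div_nonneg
    · exact mul_nonneg (by positivity) (by linarith)
    · positivity
  have p3 : 0 ≤ (n₂:ℝ) * n₁ * eta * lam₁ * (eta - lam₁) /
      ((1 - (1 - eta) * u) * ((1 - (1 - eta) * v) * ((1 - (1 - lam₁) * u) * (1 - (1 - lam₁) * v)))) := by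
    apply div_nonneg
    · exact mul_nonneg (by positivity) (by linarith)
    · positivity
  have p4 : 0 ≤ (n₂:ℝ) * n₂ * eta * eta * (eta - eta) /
      ((1 - (1 - eta) * u) * ((1 - (1 - eta) * v) * ((1 - (1 - eta) * u) * (1 - (1 - eta) * v)))) := by
    simp
  have h0 : 0 ≤ Au * Cv - Av * Cu := by
    rw [expand]
    exact add_nonneg (mul_nonneg hvu p1) (add_nonneg (mul_nonneg hvu p2)
      (add_nonneg (mul_nonneg hvu p3) (mul_nonneg hvu p4)))
  linarith [h0]
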